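/- Let $f_1,\ldots,f_m:\mathbb{R}^n\to\mathbb{R}$ be convex differentiable with $L$-Lipschitz gradients, and $g_1,\ldots,g_m$ convex lower semicontinuous with $g_i(x)$ finite. Let $\varepsilon>0$, $\beta\in(0,1/2)$, and let $d\ne 0$ be an $\varepsilon$-normalized descent direction of $\mathcal{V}$ at $x$. Then for every $\eta$ with $0<\eta\le(1-2\beta)\zeta_\varepsilon$, where $\zeta_\varepsilon=\min\{2\varepsilon/L,1\}$, and every $i=1,\ldots,m$: $$\mathcal{V}_i(x+\eta d)-\mathcal{V}_i(x)\le\eta\beta\big(\langle\nabla f_i(x),d\rangle+g_i(x+d)-g_i(x)-\varepsilon\|d\|^2\big).$$ -/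

import Mathlib

noncomputable section

/-- Convexity for extended-real-valued functions. -/
def ERealConvexOn {n : ℕ} (g : EuclideanSpace ℝ (Fin n) → EReal) : Prop :=
  ∀ a b : EuclideanSpace ℝ (Fin n), ∀ θ : ℝ, 0 ≤ θ → θ ≤ 1 →
    g (θ • a + (1 - θ) • b) ≤ (θ : EReal) * g a + ((1 - θ : ℝ) : EReal) * g b

/-- `ψ(x,y) = max_i { ⟨∇f_i(x), y⟩ + g_i(x+y) - g_i(x) }`. -/
def psi {n m : ℕ} (Gf : Fin m → EuclideanSpace ℝ (Fin n) → EuclideanSpace ℝ (Fin n))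
    (g : Fin m → EuclideanSpace ℝ (Fin n) → EReal)
    (x y : EuclideanSpace ℝ (Fin n)) : EReal :=
  ⨆ i, (((inner ℝ (Gf i x) y : ℝ) : EReal) + g i (x + y) - g i x)

lemma descent_aux {n : ℕ} (f : EuclideanSpace ℝ (Fin n) → ℝ)
    (Gf : EuclideanSpace ℝ (Fin n) → EuclideanSpace ℝ (Fin n))
    (hf : ∀ x, HasGradientAt f (Gf x) x)
    (L : ℝ) (hL : 0 < L) (hlip : LipschitzWith (Real.toNNReal L) Gf)
    (x v : EuclideanSpace ℝ (Fin n)) :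
    f (x + v) ≤ f x + (inner ℝ (Gf x) v : ℝ) + L / 2 * ‖v‖ ^ 2 := by
  set c : ℝ := (inner ℝ (Gf x) v : ℝ) with hc
  set h : ℝ → ℝ := fun t => f (x + t • v) - t * c - L / 2 * t ^ 2 * ‖v‖ ^ 2 with hh
  have hderiv : ∀ t : ℝ, HasDerivAt h
      ((inner ℝ (Gf (x + t • v)) v : ℝ) - c - L / 2 * (2 * t) * ‖v‖ ^ 2) t := by
    intro t
    have h1 : HasDerivAt (fun t : ℝ => x + t • v) v t := by
      simpa using ((hasDerivAt_id t).smul_const v).const_add x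
    have h2 := (hasGradientAt_iff_hasFDerivAt.mp (hf (x + t • v))).comp_hasDerivAt t h1
    have h3 : HasDerivAt (fun t : ℝ => f (x + t • v)) ((inner ℝ (Gf (x + t • v)) v : ℝ)) t := by
      exact h2
    have h4 : HasDerivAt (fun t : ℝ => t * c) c t := hasDerivAt_mul_const c
    have h5 : HasDerivAt (fun t : ℝ => L / 2 * t ^ 2 * ‖v‖ ^ 2)
        (L / 2 * (2 * t) * ‖v‖ ^ 2) t := by
      have := ((hasDerivAt_pow 2 t).const_mul (L / 2)).mul_const (‖v‖ ^ 2)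
      simpa [mul_comm, mul_assoc, mul_left_comm] using this
    exact (h3.sub h4).sub h5
  have hcont : Continuous h := by
    have : Differentiable ℝ h := fun t => (hderiv t).differentiableAt
    exact this.continuous
  have hanti : AntitoneOn h (Set.Icc 0 1) := by
    apply antitoneOn_of_deriv_nonpos (convex_Icc 0 1) hcont.continuousOn
      (fun t _ => (hderiv t).differentiableAt.differentiableWithinAt)
    intro t ht
    rw [interior_Icc] at ht
    rw [(hderiv t).deriv]
    have hb : (inner ℝ (Gf (x + t • v)) v : ℝ) - c ≤ L * t * ‖v‖ ^ 2 := by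
      have e1 : (inner ℝ (Gf (x + t • v)) v : ℝ) - c = (inner ℝ (Gf (x + t • v) - Gf x) v : ℝ) := by
        rw [inner_sub_left]
      rw [e1]
      calc (inner ℝ (Gf (x + t • v) - Gf x) v : ℝ) ≤ ‖Gf (x + t • v) - Gf x‖ * ‖v‖ :=
            real_inner_le_norm _ _
        _ ≤ (L * ‖t • v‖) * ‖v‖ := by
            apply mul_le_mul_of_nonneg_right _ (norm_nonneg v)
            have := hlip.dist_le_mul (x + t • v) x
            rw [dist_eq_norm, dist_eq_norm, add_sub_cancel_left,
              Real.coe_toNNReal _ hL.le] at this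
            exact this
        _ = L * t * ‖v‖ ^ 2 := by
            rw [norm_smul, Real.norm_eq_abs, abs_of_pos ht.1]; ring
    nlinarith [sq_nonneg ‖v‖, ht.1.le]
  have key := hanti (Set.left_mem_Icc.mpr zero_le_one) (Set.right_mem_Icc.mpr zero_le_one) zero_le_one
  simp only [hh, zero_smul, add_zero, one_smul, zero_pow, one_pow] at key
  nlinarith [key]

theorem stmt2 {n m : ℕ} (hm : 0 < m)
    (f : Fin m → EuclideanSpace ℝ (Fin n) → ℝ)
    (Gf : Fin m → EuclideanSpace ℝ (Fin n) → EuclideanSpace ℝ (Fin n))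
    (hfconv : ∀ i, ConvexOn ℝ Set.univ (f i))
    (hfdiff : ∀ i x, HasGradientAt (f i) (Gf i x) x)
    (L : ℝ) (hL : 0 < L)
    (hlip : ∀ i, LipschitzWith (Real.toNNReal L) (Gf i))
    (g : Fin m → EuclideanSpace ℝ (Fin n) → EReal)
    (hgconv : ∀ i, ERealConvexOn (g i))
    (hglsc : ∀ i, LowerSemicontinuous (g i))
    (hgbot : ∀ i y, g i y ≠ ⊥)
    (x : EuclideanSpace ℝ (Fin n))
    (hgx : ∀ i, g i x ≠ ⊤)
    (ε β : ℝ) (hε : 0 < ε) (hβ0 : 0 < β) (hβ1 : β < 1 / 2)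
    (d : EuclideanSpace ℝ (Fin n)) (hd : d ≠ 0)
    (hdesc : psi Gf g x d + ((ε * ‖d‖ ^ 2 : ℝ) : EReal) ≤ 0) :
    ∀ η : ℝ, 0 < η → η ≤ (1 - 2 * β) * min (2 * ε / L) 1 → ∀ i,
      ((f i (x + η • d) : EReal) + g i (x + η • d)) - ((f i x : EReal) + g i x)
        ≤ ((η * β : ℝ) : EReal) *
            (((inner ℝ (Gf i x) d : ℝ) : EReal) + g i (x + d) - g i x
              - ((ε * ‖d‖ ^ 2 : ℝ) : EReal)) := by
  intro η hη0 hηle i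
  have hβ' : 0 < 1 - 2 * β := by linarith
  have hη1 : η ≤ 1 := by
    have h1 := min_le_right (2 * ε / L) 1
    nlinarith [hηle]
  have hη2 : η ≤ (1 - 2 * β) * (2 * ε / L) := by
    have h1 := min_le_left (2 * ε / L) 1
    nlinarith [hηle]
  set A : ℝ := (inner ℝ (Gf i x) d : ℝ) with hA
  -- the i-th term of psi is ≤ -c
  have hterm : (((A : EReal) + g i (x + d) - g i x) + ((ε * ‖d‖ ^ 2 : ℝ) : EReal)) ≤ 0 := by
    refine le_trans (add_le_add_left ?_ _) hdesc
    exact le_iSup (fun j => (((inner ℝ (Gf j x) d : ℝ) : EReal) + g j (x + d) - g j x)) i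
  -- g i x is real
  set rx : ℝ := (g i x).toReal with hrx
  have hx : g i x = (rx : EReal) := (EReal.coe_toReal (hgx i) (hgbot i x)).symm
  -- g i (x + d) is real
  have htop : g i (x + d) ≠ ⊤ := by
    intro h
    rw [h, hx, EReal.coe_add_top, EReal.top_sub_coe, EReal.top_add_coe] at hterm
    exact absurd hterm (by simp)
  set rd : ℝ := (g i (x + d)).toReal with hrd
  have hxd : g i (x + d) = (rd : EReal) := (EReal.coe_toReal htop (hgbot i (x + d))).symm
  rw [hx, hxd] at hterm
  have hr : A + rd - rx + ε * ‖d‖ ^ 2 ≤ 0 := by exact_mod_cast hterm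
  -- convexity of g along the segment
  have hcomb : η • (x + d) + (1 - η) • x = x + η • d := by module
  have hconv := hgconv i (x + d) x η hη0.le hη1
  rw [hcomb, hx, hxd] at hconv
  have hconv' : g i (x + η • d) ≤ ((η * rd + (1 - η) * rx : ℝ) : EReal) := by
    refine le_trans hconv (le_of_eq ?_)
    rw [EReal.coe_add, EReal.coe_mul, EReal.coe_mul]
  have htope : g i (x + η • d) ≠ ⊤ :=
    (lt_of_le_of_lt hconv' (EReal.coe_lt_top _)).ne
  set re : ℝ := (g i (x + η • d)).toReal with hre
  have hxe : g i (x + η • d) = (re : EReal) := (EReal.coe_toReal htope (hgbot i (x + η • d))).symm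
  rw [hxe] at hconv'
  have hcv : re ≤ η * rd + (1 - η) * rx := by exact_mod_cast hconv'
  -- descent lemma
  have hds := descent_aux (f i) (Gf i) (hfdiff i) L hL (hlip i) x (η • d)
  rw [real_inner_smul_right, ← hA] at hds
  have hnrm : ‖η • d‖ ^ 2 = η ^ 2 * ‖d‖ ^ 2 := by
    rw [norm_smul, Real.norm_eq_abs, abs_of_pos hη0, mul_pow]
  rw [hnrm] at hds
  -- reduce to a real inequality
  rw [hx, hxd, hxe]
  have hgoal : (f i (x + η • d) + re) - (f i x + rx) ≤ (η * β) * (A + rd - rx - ε * ‖d‖ ^ 2) := by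
    have hηL : η * L ≤ (1 - 2 * β) * (2 * ε) := by
      calc η * L ≤ ((1 - 2 * β) * (2 * ε / L)) * L := by nlinarith
        _ = (1 - 2 * β) * (2 * ε) := by field_simp
    nlinarith [mul_le_mul_of_nonneg_left hr (mul_nonneg hη0.le (by linarith : (0:ℝ) ≤ 1 - β)),
      mul_le_mul_of_nonneg_right hηL (by positivity : (0:ℝ) ≤ η * ‖d‖ ^ 2 / 2),
      sq_nonneg ‖d‖, hds, hcv]
  exact_mod_cast hgoal
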